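/- arXiv:2009.03276 — 2 statements merged into one kernel-verified Lean document; each statement's English description precedes it below -/
import Mathlib

section
/- Let n be a natural number, t = (t_1, …, t_{n+1}) ∈ ℂ^{n+1} and X ∈ ℂ with |t_k X| < 1 for all k = 1, …, n+1. Then ( Σ_{j=0}^{n} (-1)^{j+1} (n+1-j) e_j(t) X^j ) · ( Σ_{q=1}^∞ h_q(t) X^q ) + Σ_{j=1}^{n} (-1)^{j+1} (n+1-j) e_j(t) X^j = - Σ_{k=1}^{n+1} t_k X / (1 - t_k X). -/
open Finset

/-- Product of geometric series. -/
lemma geo_aux : ∀ (m : ℕ) (u : Fin m → ℂ), (∀ k, ‖u k‖ < 1) →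
    Summable (fun α : Fin m → ℕ => ‖∏ k, u k ^ α k‖) ∧
    ∑' α : Fin m → ℕ, ∏ k, u k ^ α k = ∏ k, (1 - u k)⁻¹ := by
  intro m
  induction m with
  | zero =>
    intro u _
    constructor
    · exact .of_finite
    · rw [tsum_eq_single default (fun b hb => absurd (Subsingleton.elim b default) hb)]
      simp
  | succ m ih =>
    intro u hu
    obtain ⟨ihs, iht⟩ := ih (Fin.tail u) (fun k => hu k.succ)
    have h0 := hu 0
    have h1 : Summable (fun a : ℕ => ‖u 0 ^ a‖) := by
      simpa [norm_pow] using summable_geometric_of_lt_one (norm_nonneg (u 0)) h0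
    set g : ℕ × (Fin m → ℕ) → ℂ := fun p => u 0 ^ p.1 * ∏ i, Fin.tail u i ^ p.2 i with hg
    have hgsum : Summable (fun p => ‖g p‖) := by
      simpa [hg, norm_mul] using
        h1.mul_of_nonneg ihs (fun _ => norm_nonneg _) (fun _ => norm_nonneg _)
    have key : ∀ α : Fin (m + 1) → ℕ, ∏ k, u k ^ α k = g ((Fin.consEquiv fun _ : Fin (m + 1) => ℕ).symm α) := by
      intro α
      rw [Fin.prod_univ_succ]
      rfl
    constructor
    · have h2 : Summable ((fun p => ‖g p‖) ∘ ⇑(Fin.consEquiv fun _ : Fin (m + 1) => ℕ).symm) :=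
        ((Fin.consEquiv fun _ : Fin (m + 1) => ℕ).symm.summable_iff).2 hgsum
      refine h2.congr fun α => ?_
      simp only [Function.comp_apply, key α]
    · have e1 : ∑' α : Fin (m+1) → ℕ, ∏ k, u k ^ α k = ∑' p, g p := by
        rw [← (Fin.consEquiv fun _ : Fin (m + 1) => ℕ).symm.tsum_eq g]
        exact tsum_congr key
      have e2 : (∑' a : ℕ, u 0 ^ a) * (∑' β : Fin m → ℕ, ∏ i, Fin.tail u i ^ β i) = ∑' p, g p :=
        tsum_mul_tsum_of_summable_norm h1 ihs
      rw [e1, ← e2, tsum_geometric_of_norm_lt_one h0, iht, Fin.prod_univ_succ]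
      rfl

lemma alg_id (n : ℕ) (u : Fin (n + 1) → ℂ) :
    ∑ j ∈ range (n + 1), (-1 : ℂ) ^ (j + 1) * ((n + 1 - j : ℕ) : ℂ) *
        (∑ A ∈ powersetCard j (univ : Finset (Fin (n + 1))), ∏ k ∈ A, u k)
      = -∑ k, ∏ i ∈ univ.erase k, (1 - u i) := by
  have expand : ∀ k : Fin (n + 1), ∏ i ∈ univ.erase k, (1 - u i)
      = ∑ A ∈ (univ.erase k).powerset, ∏ i ∈ A, (-u i) := by
    intro k
    rw [show (∏ i ∈ univ.erase k, (1 - u i)) = ∏ i ∈ univ.erase k, ((-u i) + 1) from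
      prod_congr rfl fun i _ => by ring]
    rw [prod_add]
    simp
  have h1 : ∑ k, ∏ i ∈ univ.erase k, (1 - u i)
      = ∑ A ∈ (univ : Finset (Fin (n + 1))).powerset, ∑ _k ∈ univ \ A, ∏ i ∈ A, (-u i) := by
    rw [sum_congr rfl fun k _ => expand k]
    refine sum_comm' fun k A => ?_
    simp only [mem_powerset, mem_sdiff, mem_univ, true_and, subset_erase, and_comm]
  have h2 : ∀ A ∈ (univ : Finset (Fin (n + 1))).powerset,
      (∑ _k ∈ univ \ A, ∏ i ∈ A, (-u i)) = ((n + 1 - #A : ℕ) : ℂ) * ∏ i ∈ A, (-u i) := by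
    intro A _
    rw [sum_const, card_sdiff_of_subset (subset_univ A), nsmul_eq_mul]
    simp
  rw [h1, sum_congr rfl h2, powerset_card_biUnion,
    sum_biUnion (fun i _ j _ hij => pairwise_disjoint_powersetCard _ hij)]
  simp only [card_univ, Fintype.card_fin]
  conv_rhs => rw [Finset.sum_range_succ]
  have hz : ∑ A ∈ powersetCard (n + 1) (univ : Finset (Fin (n + 1))),
      ((n + 1 - #A : ℕ) : ℂ) * ∏ i ∈ A, (-u i) = 0 := by
    refine sum_eq_zero fun A hA => ?_
    rw [(mem_powersetCard.mp hA).2]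
    simp
  rw [hz, add_zero, ← Finset.sum_neg_distrib]
  refine sum_congr rfl fun j hj => ?_
  rw [← Finset.sum_neg_distrib, mul_sum]
  refine sum_congr rfl fun A hA => ?_
  have hcard : #A = j := (mem_powersetCard.mp hA).2
  have : ∏ i ∈ A, (-u i) = (-1 : ℂ) ^ j * ∏ i ∈ A, u i := by
    rw [show (fun i => -u i) = fun i => (-1 : ℂ) * u i from funext fun i => by ring]
    rw [prod_mul_distrib, prod_const, hcard]
  rw [hcard, this]
  ring

/-- For `t ∈ ℂ^{n+1}` and `X ∈ ℂ` with `|t_k X| < 1` for all `k`,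
`( Σ_{j=0}^{n} (-1)^{j+1} (n+1-j) e_j(t) X^j ) · ( Σ_{q=1}^∞ h_q(t) X^q )
   + Σ_{j=1}^{n} (-1)^{j+1} (n+1-j) e_j(t) X^j = - Σ_{k=1}^{n+1} t_k X / (1 - t_k X)`,
where `e_j` is the elementary symmetric polynomial of degree `j` and `h_q` the complete
homogeneous symmetric polynomial of degree `q`. -/
theorem stmt_2 (n : ℕ) (t : Fin (n + 1) → ℂ) (X : ℂ)
    (h : ∀ k, ‖t k * X‖ < 1) :
    (∑ j ∈ Finset.range (n + 1),
          (-1 : ℂ) ^ (j + 1) * ((n + 1 - j : ℕ) : ℂ) *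
            (∑ A ∈ Finset.powersetCard j (Finset.univ : Finset (Fin (n + 1))),
              ∏ k ∈ A, t k) * X ^ j) *
        (∑' q : ℕ,
          (∑ α ∈ Finset.Nat.antidiagonalTuple (n + 1) (q + 1), ∏ k, t k ^ α k) * X ^ (q + 1))
      + ∑ j ∈ Finset.Icc 1 n,
          (-1 : ℂ) ^ (j + 1) * ((n + 1 - j : ℕ) : ℂ) *
            (∑ A ∈ Finset.powersetCard j (Finset.univ : Finset (Fin (n + 1))),
              ∏ k ∈ A, t k) * X ^ j
      = - ∑ k, t k * X / (1 - t k * X) := by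
  classical
  obtain ⟨hnorm, htsum⟩ := geo_aux (n + 1) (fun k => t k * X) h
  have hs : Summable (fun α : Fin (n + 1) → ℕ => ∏ k, (t k * X) ^ α k) :=
    Summable.of_norm hnorm
  have hne : ∀ k, (1 : ℂ) - t k * X ≠ 0 := by
    intro k hc
    rw [sub_eq_zero] at hc
    have h2 := h k
    rw [← hc] at h2
    simp at h2
  set F : (Fin (n + 1) → ℕ) → ℂ := fun α => ∏ k, (t k * X) ^ α k with hF
  set g : ℕ → ℂ := fun q => ∑ α ∈ Finset.Nat.antidiagonalTuple (n + 1) q, F α with hg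
  set E := Finset.Nat.sigmaAntidiagonalTupleEquivTuple (n + 1) with hE
  have hsig : Summable (F ∘ E) := E.summable_iff.2 hs
  have hfib : ∀ q : ℕ, (∑' c : (Finset.Nat.antidiagonalTuple (n + 1) q : Finset _),
      F c) = g q := fun q => Finset.tsum_subtype _ F
  have hgsum : Summable g := (hsig.sigma).congr fun q => hfib q
  have hgt : ∑' q, g q = ∏ k, (1 - t k * X)⁻¹ := by
    rw [← htsum]
    calc ∑' q, g q
        = ∑' (q : ℕ) (c : (Finset.Nat.antidiagonalTuple (n + 1) q : Finset _)),
            F (E ⟨q, c⟩) := tsum_congr fun q => (hfib q).symm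
      _ = ∑' x, F (E x) := (Summable.tsum_sigma' (fun q => Summable.of_finite) hsig).symm
      _ = tsum F := E.tsum_eq F
  have hg0 : g 0 = 1 := by
    simp [hg, hF, Finset.Nat.antidiagonalTuple_zero_right]
  -- identify statement tsum terms
  have hterm : ∀ q : ℕ,
      (∑ α ∈ Finset.Nat.antidiagonalTuple (n + 1) (q + 1), ∏ k, t k ^ α k) * X ^ (q + 1)
        = g (q + 1) := by
    intro q
    rw [hg, Finset.sum_mul]
    refine sum_congr rfl fun α hα => ?_
    have hsumα : ∑ k, α k = q + 1 := Finset.Nat.mem_antidiagonalTuple.mp hα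
    rw [hF, ← hsumα, ← Finset.prod_pow_eq_pow_sum, ← prod_mul_distrib]
    exact prod_congr rfl fun k _ => (mul_pow (t k) X (α k)).symm
  have hS : (∑' q : ℕ,
      (∑ α ∈ Finset.Nat.antidiagonalTuple (n + 1) (q + 1), ∏ k, t k ^ α k) * X ^ (q + 1))
        = (∏ k, (1 - t k * X)⁻¹) - 1 := by
    rw [tsum_congr hterm]
    have h0 := Summable.tsum_eq_zero_add hgsum
    rw [hgt, hg0] at h0
    linear_combination -h0
  -- P
  have hP : (∑ j ∈ Finset.range (n + 1),
      (-1 : ℂ) ^ (j + 1) * ((n + 1 - j : ℕ) : ℂ) *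
        (∑ A ∈ Finset.powersetCard j (Finset.univ : Finset (Fin (n + 1))),
          ∏ k ∈ A, t k) * X ^ j)
      = -∑ k, ∏ i ∈ univ.erase k, (1 - t i * X) := by
    rw [← alg_id n (fun k => t k * X)]
    refine sum_congr rfl fun j hj => ?_
    have he : (∑ A ∈ powersetCard j (univ : Finset (Fin (n + 1))), ∏ k ∈ A, t k) * X ^ j
        = ∑ A ∈ powersetCard j (univ : Finset (Fin (n + 1))), ∏ k ∈ A, (t k * X) := by
      rw [Finset.sum_mul]
      refine sum_congr rfl fun A hA => ?_
      rw [← (mem_powersetCard.mp hA).2, ← prod_const, ← prod_mul_distrib]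
    rw [mul_assoc, he, mul_assoc]
  -- Icc
  have hIcc : (∑ j ∈ Finset.Icc 1 n,
      (-1 : ℂ) ^ (j + 1) * ((n + 1 - j : ℕ) : ℂ) *
        (∑ A ∈ Finset.powersetCard j (Finset.univ : Finset (Fin (n + 1))),
          ∏ k ∈ A, t k) * X ^ j)
      = (∑ j ∈ Finset.range (n + 1),
      (-1 : ℂ) ^ (j + 1) * ((n + 1 - j : ℕ) : ℂ) *
        (∑ A ∈ Finset.powersetCard j (Finset.univ : Finset (Fin (n + 1))),
          ∏ k ∈ A, t k) * X ^ j) + ((n : ℂ) + 1) := by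
    rw [Finset.range_eq_Ico, Finset.sum_eq_sum_Ico_succ_bot (Nat.succ_pos n),
      Nat.succ_eq_add_one, Finset.Ico_add_one_right_eq_Icc]
    have c0 : (-1 : ℂ) ^ (0 + 1) * ((n + 1 - 0 : ℕ) : ℂ) *
        (∑ A ∈ Finset.powersetCard 0 (Finset.univ : Finset (Fin (n + 1))),
          ∏ k ∈ A, t k) * X ^ 0 = -((n : ℂ) + 1) := by
      have h1 : ∑ A ∈ Finset.powersetCard 0 (Finset.univ : Finset (Fin (n + 1))),
          ∏ k ∈ A, t k = 1 := by simp
      rw [h1]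
      push_cast
      ring
    rw [c0]
    ring
  -- P * H
  have hPH : (∑ j ∈ Finset.range (n + 1),
      (-1 : ℂ) ^ (j + 1) * ((n + 1 - j : ℕ) : ℂ) *
        (∑ A ∈ Finset.powersetCard j (Finset.univ : Finset (Fin (n + 1))),
          ∏ k ∈ A, t k) * X ^ j) * (∏ k, (1 - t k * X)⁻¹)
      = -∑ k, (1 - t k * X)⁻¹ := by
    rw [hP, neg_mul, Finset.sum_mul, neg_inj]
    refine sum_congr rfl fun k _ => ?_
    have hp : (∏ i, (1 - t i * X)⁻¹)
        = (1 - t k * X)⁻¹ * ∏ i ∈ univ.erase k, (1 - t i * X)⁻¹ :=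
      (Finset.mul_prod_erase univ _ (mem_univ k)).symm
    rw [hp, ← mul_assoc, mul_comm (∏ i ∈ univ.erase k, (1 - t i * X)) _, mul_assoc,
      ← prod_mul_distrib]
    rw [prod_congr rfl fun i _ => mul_inv_cancel₀ (hne i)]
    simp
  -- RHS
  have hR : (∑ k, t k * X / (1 - t k * X))
      = (∑ k, (1 - t k * X)⁻¹) - ((n : ℂ) + 1) := by
    have hfin : ∀ k, t k * X / (1 - t k * X) = (1 - t k * X)⁻¹ - 1 := by
      intro k
      rw [div_eq_iff (hne k), sub_mul, inv_mul_cancel₀ (hne k)]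
      ring
    rw [sum_congr rfl fun k _ => hfin k, Finset.sum_sub_distrib]
    simp only [sum_const, card_univ, Fintype.card_fin, nsmul_eq_mul, mul_one]
    push_cast
    ring
  rw [hS, hIcc, hR]
  linear_combination hPH
end

section
/- For every real number a with 0 < a < 1, (d/ds)|_{s=0} ζ(s, a) + (d/ds)|_{s=0} ζ(s, 1-a) = - log | e^{2π√(-1) a} - 1 |, where the derivatives are in the s-variable of the meromorphically continued Hurwitz zeta function. -/
open HurwitzZeta Complex Filter Topology Finset Set

namespace Stmt10Aux

/-- Abel summation identity. -/
lemma abel_identity (w : ℂ) (b : ℕ → ℂ) (N : ℕ) :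
    ∑ k ∈ range N, w ^ (k+1) * b (k+1)
      = (∑ k ∈ range N, (∑ j ∈ range (k+1), w ^ (j+1)) * (b (k+1) - b (k+2)))
        + (∑ j ∈ range N, w ^ (j+1)) * b (N+1) := by
  induction N with
  | zero => simp
  | succ N ih =>
      simp only [Finset.sum_range_succ, ih]
      ring

lemma coe_ne_zero {a : ℝ} (h0 : 0 < a) (h1 : a < 1) : (↑a : UnitAddCircle) ≠ 0 := by
  intro h
  rw [AddCircle.coe_eq_zero_iff] at h
  obtain ⟨n, hn⟩ := h
  simp only [zsmul_eq_mul, mul_one] at hn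
  have h2 : (0:ℝ) < n := hn ▸ h0
  have h3 : ((n:ℝ)) < 1 := hn ▸ h1
  have h2' : (0:ℤ) < n := by exact_mod_cast h2
  have h3' : (n:ℤ) < 1 := by exact_mod_cast h3
  omega

lemma coe_one_sub (a : ℝ) : ((1 - a : ℝ) : UnitAddCircle) = -(↑a : UnitAddCircle) := by
  have h1 : ((1:ℝ) : UnitAddCircle) = 0 := by
    rw [AddCircle.coe_eq_zero_iff]; exact ⟨1, by simp⟩
  calc ((1 - a : ℝ) : UnitAddCircle) = ((1:ℝ) : UnitAddCircle) - (↑a) := by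
        rw [← QuotientAddGroup.mk_sub]
    _ = -(↑a : UnitAddCircle) := by rw [h1, zero_sub]

lemma norm_z (a : ℝ) : ‖Complex.exp (2 * Real.pi * Complex.I * a)‖ = 1 := by
  rw [Complex.norm_exp]
  have : (2 * Real.pi * Complex.I * a).re = 0 := by simp [Complex.mul_re]
  rw [this, Real.exp_zero]

lemma z_ne_one {a : ℝ} (h0 : 0 < a) (h1 : a < 1) :
    Complex.exp (2 * Real.pi * Complex.I * a) ≠ 1 := by
  rw [Ne, Complex.exp_eq_one_iff]
  rintro ⟨n, hn⟩
  have hpi : (Real.pi : ℂ) ≠ 0 := by exact_mod_cast Real.pi_ne_zero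
  have : (a : ℂ) = n := by
    have hne : (2 * Real.pi * Complex.I : ℂ) ≠ 0 := by
      simp [Real.pi_ne_zero, Complex.I_ne_zero]
    have h : (a:ℂ) * (2 * Real.pi * Complex.I) = (n:ℂ) * (2 * Real.pi * Complex.I) := by
      rw [← hn]; ring
    exact mul_right_cancel₀ hne h
  have ha : a = (n : ℝ) := by exact_mod_cast this
  have h2 : (0:ℝ) < (n:ℝ) := ha ▸ h0
  have h3 : ((n:ℝ)) < 1 := ha ▸ h1
  have h2' : (0:ℤ) < n := by exact_mod_cast h2
  have h3' : (n:ℤ) < 1 := by exact_mod_cast h3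
  omega


lemma rpow_diff_nonneg {s : ℝ} (hs : 0 < s) {x : ℝ} (hx : 1 ≤ x) :
    0 ≤ x ^ (-s) - (x + 1) ^ (-s) := by
  have hx0 : (0:ℝ) < x := lt_of_lt_of_le one_pos hx
  have h := Real.rpow_le_rpow (le_of_lt hx0) (by linarith : x ≤ x + 1) (le_of_lt hs)
  rw [Real.rpow_neg (le_of_lt hx0), Real.rpow_neg (by linarith : (0:ℝ) ≤ x + 1), sub_nonneg]
  exact inv_anti₀ (Real.rpow_pos_of_pos hx0 s) h

lemma rpow_diff_bound {s : ℝ} (hs1 : 1 ≤ s) (hs2 : s ≤ 2) {x : ℝ} (hx : 1 ≤ x) :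
    x ^ (-s) - (x + 1) ^ (-s) ≤ 3 / x ^ 2 := by
  have hx0 : (0:ℝ) < x := lt_of_lt_of_le one_pos hx
  have hxs : (0:ℝ) < x ^ s := Real.rpow_pos_of_pos hx0 s
  have hxle : x ≤ x ^ s := by
    nth_rewrite 1 [← Real.rpow_one x]
    exact Real.rpow_le_rpow_of_exponent_le hx hs1
  have hxinv : (0:ℝ) < 1 / x := by positivity
  have h1x : (1:ℝ) ≤ 1 + 1 / x := by linarith
  -- (1 + 1/x)^s ≤ (1 + 1/x)^2 ≤ 1 + 3/x
  have hupper : (1 + 1 / x : ℝ) ^ s ≤ 1 + 3 / x := by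
    calc (1 + 1 / x : ℝ) ^ s ≤ (1 + 1 / x) ^ (2:ℝ) :=
          Real.rpow_le_rpow_of_exponent_le h1x hs2
      _ = (1 + 1 / x) ^ (2:ℕ) := by rw [← Real.rpow_natCast]; norm_num
      _ ≤ 1 + 3 / x := by
          have hle1 : 1 / x ≤ 1 := by
            rw [div_le_one hx0]; exact hx
          have h2 : (1 / x) ^ 2 ≤ 1 / x := by nlinarith
          have hexp : (1 + 1/x:ℝ)^2 = 1 + 2*(1/x) + (1/x)^2 := by ring
          have h3 : (3:ℝ)/x = 3*(1/x) := by ring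
          rw [hexp, h3]; linarith
  have hkey : (x + 1) ^ s ≤ x ^ s * (1 + 3 / x) := by
    have hmul : (x + 1 : ℝ) = x * (1 + 1 / x) := by field_simp
    calc (x + 1 : ℝ) ^ s = x ^ s * (1 + 1 / x) ^ s := by
          rw [hmul, Real.mul_rpow (le_of_lt hx0) (by positivity)]
      _ ≤ x ^ s * (1 + 3 / x) := mul_le_mul_of_nonneg_left hupper (le_of_lt hxs)
  have hchain : x ^ (-s) - (x + 1) ^ (-s) ≤ (x ^ s)⁻¹ - (x ^ s * (1 + 3 / x))⁻¹ := by
    rw [Real.rpow_neg (le_of_lt hx0), Real.rpow_neg (by linarith : (0:ℝ) ≤ x + 1)]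
    have := inv_anti₀ (Real.rpow_pos_of_pos (by linarith : (0:ℝ) < x + 1) s) hkey
    linarith
  have halg : (x ^ s)⁻¹ - (x ^ s * (1 + 3 / x))⁻¹ = (x ^ s)⁻¹ * ((3 / x) / (1 + 3 / x)) := by
    field_simp
    ring
  have hfrac : (3 / x) / (1 + 3 / x) ≤ 3 / x := by
    rw [div_le_iff₀ (by positivity)]
    nlinarith [sq_nonneg (3 / x)]
  calc x ^ (-s) - (x + 1) ^ (-s) ≤ (x ^ s)⁻¹ * ((3 / x) / (1 + 3 / x)) := by
        rw [← halg]; exact hchain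
    _ ≤ x⁻¹ * (3 / x) := by
        apply mul_le_mul _ hfrac (by positivity) (by positivity)
        exact inv_anti₀ hx0 hxle
    _ = 3 / x ^ 2 := by rw [sq]; field_simp
  
lemma partial_sum_bound {w : ℂ} (hw : ‖w‖ = 1) (hw1 : w ≠ 1) (N : ℕ) :
    ‖∑ j ∈ range N, w ^ (j + 1)‖ ≤ 2 / ‖1 - w‖ := by
  have h : ∑ j ∈ range N, w ^ (j + 1) = w * ((w ^ N - 1) / (w - 1)) := by
    rw [← geom_sum_eq hw1, Finset.mul_sum]
    exact Finset.sum_congr rfl fun j _ => by ring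
  rw [h]
  have hw10 : w - 1 ≠ 0 := sub_ne_zero.mpr hw1
  rw [norm_mul, norm_div, hw]
  rw [one_mul]
  have h1 : ‖w ^ N - 1‖ ≤ 2 := by
    calc ‖w ^ N - 1‖ ≤ ‖w ^ N‖ + ‖(1:ℂ)‖ := norm_sub_le _ _
      _ = 2 := by rw [norm_pow, hw]; norm_num
  have h2 : ‖w - 1‖ = ‖1 - w‖ := norm_sub_rev _ _
  rw [h2]
  exact (div_le_div_iff_of_pos_right (norm_pos_iff.mpr (sub_ne_zero.mpr hw1.symm))).mpr h1
  

lemma expZeta_apply_one {a : ℝ} (h0 : 0 < a) (h1 : a < 1) :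
    expZeta (↑a : UnitAddCircle) 1
      = -Complex.log (1 - Complex.exp (2 * Real.pi * Complex.I * a)) := by
  set z : ℂ := Complex.exp (2 * Real.pi * Complex.I * a) with hzdef
  have hz1 : z ≠ 1 := z_ne_one h0 h1
  have hzn : ‖z‖ = 1 := norm_z a
  set C : ℝ := 2 / ‖1 - z‖ with hCdef
  have hC0 : 0 ≤ C := by positivity
  set b : ℝ → ℕ → ℂ := fun s m => (((m:ℝ) ^ (-s) : ℝ) : ℂ) with hbdef
  set S : ℕ → ℂ := fun N => ∑ j ∈ range N, z ^ (j+1) with hSdef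
  set g : ℝ → ℕ → ℂ := fun s k => S (k+1) * (b s (k+1) - b s (k+2)) with hgdef
  have hSle : ∀ N, ‖S N‖ ≤ C := fun N => partial_sum_bound hzn hz1 N
  -- (2) partial sums of the Dirichlet series tend to expZeta for s > 1
  have hP : ∀ s : ℝ, 1 < s →
      Tendsto (fun N => ∑ k ∈ range N, z ^ (k+1) * b s (k+1)) atTop
        (𝓝 (expZeta (↑a : UnitAddCircle) (s:ℂ))) := by
    intro s hs
    have hre : 1 < ((s:ℂ)).re := by simpa using hs
    have h := hasSum_expZeta_of_one_lt_re a hre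
    have hs0 : s ≠ 0 := by linarith
    have hfn : ∀ n : ℕ,
        cexp (2 * Real.pi * I * a * n) / (n:ℂ) ^ (s:ℂ) = z ^ n * b s n := by
      intro n
      rcases Nat.eq_zero_or_pos n with hn | hn
      · subst hn
        simp only [Nat.cast_zero, mul_zero, Complex.exp_zero, hbdef]
        rw [Complex.zero_cpow (by exact_mod_cast hs0), Real.zero_rpow (neg_ne_zero.mpr hs0)]
        simp
      · have he : cexp (2 * Real.pi * I * a * n) = z ^ n := by
          rw [hzdef, ← Complex.exp_nat_mul]
          ring_nf
        have hcpow : ((n:ℂ)) ^ (s:ℂ) = (((n:ℝ) ^ s : ℝ) : ℂ) := by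
          rw [show ((n:ℂ)) = (((n:ℝ)):ℂ) by push_cast; rfl,
            ← Complex.ofReal_cpow (Nat.cast_nonneg n)]
        rw [he, hcpow]
        simp only [hbdef]
        rw [Real.rpow_neg (Nat.cast_nonneg n), Complex.ofReal_inv, div_eq_mul_inv]
    simp only [hfn] at h
    have h3 : HasSum (fun n => z ^ (n+1) * b s (n+1)) (expZeta (↑a : UnitAddCircle) (s:ℂ)) := by
      refine (hasSum_nat_add_iff (f := fun n => z ^ n * b s n) 1).mpr ?_
      have h00 : b s 0 = 0 := by
        simp [hbdef, Real.zero_rpow (neg_ne_zero.mpr hs0)]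
      simpa [h00] using h
    exact h3.tendsto_sum_nat
  -- (3) Abel identity
  have habel : ∀ (s : ℝ) (N : ℕ), ∑ k ∈ range N, z ^ (k+1) * b s (k+1)
      = (∑ k ∈ range N, g s k) + S N * b s (N+1) := fun s N => abel_identity z (b s) N
  -- (4) tail tends to zero
  have htail : ∀ s : ℝ, 0 < s → Tendsto (fun N => S N * b s (N+1)) atTop (𝓝 0) := by
    intro s hs
    have hb : ∀ N : ℕ, ‖S N * b s (N+1)‖ ≤ C * (((N:ℝ)+1) ^ (-s)) := by
      intro N
      rw [norm_mul]
      apply mul_le_mul (hSle N) _ (norm_nonneg _) hC0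
      simp only [hbdef, Complex.norm_real]
      rw [Real.norm_eq_abs, _root_.abs_of_nonneg (Real.rpow_nonneg (by positivity) _)]
      apply le_of_eq
      congr 1
      push_cast; ring
    have ht : Tendsto (fun N : ℕ => C * (((N:ℝ)+1) ^ (-s))) atTop (𝓝 0) := by
      have h2 : Tendsto (fun N : ℕ => ((N:ℝ)+1)) atTop atTop :=
        tendsto_atTop_add_const_right _ _ tendsto_natCast_atTop_atTop
      have h3 := (tendsto_rpow_neg_atTop hs).comp h2
      have h4 := h3.const_mul C
      simpa using h4
    exact squeeze_zero_norm hb ht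
  -- (5)
  have hQ : ∀ s : ℝ, 1 < s → Tendsto (fun N => ∑ k ∈ range N, g s k) atTop
      (𝓝 (expZeta (↑a : UnitAddCircle) (s:ℂ))) := by
    intro s hs
    have := (hP s hs).sub (htail s (by linarith))
    rw [sub_zero] at this
    exact this.congr (fun N => by rw [habel s N]; ring)
  -- (6) uniform bound for s ∈ [1,2]
  have hgb : ∀ s ∈ Icc (1:ℝ) 2, ∀ k : ℕ, ‖g s k‖ ≤ C * (3 / ((k:ℝ)+1) ^ 2) := by
    rintro s ⟨hs1, hs2⟩ k
    have hx : (1:ℝ) ≤ (k:ℝ)+1 := by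
      have := Nat.cast_nonneg (α := ℝ) k
      linarith
    have hdiff : b s (k+1) - b s (k+2)
        = ((((k:ℝ)+1) ^ (-s) - (((k:ℝ)+1)+1) ^ (-s) : ℝ) : ℂ) := by
      rw [hbdef]
      push_cast
      ring_nf
    rw [hgdef, norm_mul, hdiff, Complex.norm_real, Real.norm_eq_abs,
      _root_.abs_of_nonneg (rpow_diff_nonneg (by linarith) hx)]
    exact mul_le_mul (hSle _) (rpow_diff_bound hs1 hs2 hx)
      (rpow_diff_nonneg (by linarith) hx) hC0
  -- (7) summable bound
  have hbound_summable : Summable (fun k : ℕ => C * (3 / ((k:ℝ)+1) ^ 2)) := by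
    apply Summable.mul_left
    have h1 : Summable (fun n : ℕ => 3 / (n:ℝ) ^ 2) :=
      (Real.summable_one_div_nat_pow.mpr one_lt_two).mul_left 3 |>.congr
        (fun n => by ring)
    have := (summable_nat_add_iff 1).mpr h1
    exact this.congr (fun n => by push_cast; ring)
  -- (8)
  have hsummable : ∀ s ∈ Icc (1:ℝ) 2, Summable (g s) := fun s hs =>
    Summable.of_norm_bounded hbound_summable (hgb s hs)
  -- (9)
  have hval : ∀ s ∈ Ioc (1:ℝ) 2, expZeta (↑a : UnitAddCircle) (s:ℂ) = ∑' k, g s k :=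
    fun s hs => tendsto_nhds_unique (hQ s hs.1)
      ((hsummable s ⟨hs.1.le, hs.2⟩).hasSum.tendsto_sum_nat)
  -- (10) the limit value l and Abel's limit theorem
  have hsum1 : Summable (g 1) := hsummable 1 ⟨le_refl 1, one_le_two⟩
  set l : ℂ := ∑' k, g 1 k with hldef
  have hl_partial : Tendsto (fun N => ∑ k ∈ range N, z ^ (k+1) * b 1 (k+1)) atTop (𝓝 l) := by
    have h := (hsum1.hasSum.tendsto_sum_nat).add (htail 1 one_pos)
    rw [add_zero] at h
    exact h.congr (fun N => (habel 1 N).symm)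
  set f : ℕ → ℂ := fun n => z ^ n * b 1 n with hfdef
  have hf0 : f 0 = 0 := by
    simp [hfdef, hbdef, Real.zero_rpow (by norm_num : (-1:ℝ) ≠ 0)]
  have hf_partial : Tendsto (fun N => ∑ i ∈ range N, f i) atTop (𝓝 l) := by
    rw [← tendsto_add_atTop_iff_nat 1]
    have : ∀ N : ℕ, ∑ i ∈ range (N+1), f i = ∑ k ∈ range N, z ^ (k+1) * b 1 (k+1) := by
      intro N
      rw [Finset.sum_range_succ']
      simp [hf0]
      rfl
    exact hl_partial.congr (fun N => (this N).symm)
  have hAbel := Complex.tendsto_tsum_powerSeries_nhdsWithin_lt hf_partial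
  rw [Filter.tendsto_map'_iff] at hAbel
  -- identify the power series with -log(1 - x z) for x ∈ (0,1)
  have heq : ∀ x ∈ Ioo (0:ℝ) 1, ∑' n, f n * (x:ℂ) ^ n = -Complex.log (1 - x * z) := by
    intro x hx
    have hnorm : ‖(x:ℂ) * z‖ < 1 := by
      rw [norm_mul, hzn, mul_one, Complex.norm_real, Real.norm_eq_abs,
        _root_.abs_of_nonneg hx.1.le]
      exact hx.2
    have hs := Complex.hasSum_taylorSeries_neg_log hnorm
    rw [← hs.tsum_eq]
    apply tsum_congr
    intro n
    simp only [hfdef, hbdef]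
    rw [Real.rpow_neg_one, Complex.ofReal_inv, mul_pow, div_eq_mul_inv]
    push_cast
    ring
  have hlog_ok : 0 < (1 - z).re ∨ (1 - z).im ≠ 0 := by
    left
    rw [Complex.sub_re, Complex.one_re, sub_pos]
    rcases lt_or_ge z.re 1 with h | h
    · exact h
    · exfalso
      have habs : ‖z‖ = 1 := by exact hzn
      have h2 : z.re ≤ 1 := by
        have := Complex.abs_re_le_norm z
        rw [habs] at this
        exact le_trans (le_abs_self _) this
      have hre1 : z.re = 1 := le_antisymm h2 h
      have hnsq : Complex.normSq z = 1 := by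
        rw [← Complex.sq_norm, habs]; norm_num
      rw [Complex.normSq_apply, hre1] at hnsq
      have him : z.im = 0 := by nlinarith
      exact hz1 (Complex.ext hre1 him)
  have hcont : Tendsto (fun x : ℝ => -Complex.log (1 - ↑x * z)) (𝓝[<] (1:ℝ))
      (𝓝 (-Complex.log (1 - z))) := by
    have hc1 : ContinuousAt (fun x : ℝ => (1 : ℂ) - ↑x * z) 1 := by fun_prop
    have hval : (fun x : ℝ => (1 : ℂ) - ↑x * z) 1 = 1 - z := by simp
    have hc2 : ContinuousAt (fun x : ℝ => Complex.log (1 - ↑x * z)) 1 := by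
      apply ContinuousAt.clog hc1
      show (1 : ℂ) - ((1:ℝ):ℂ) * z ∈ Complex.slitPlane
      rw [Complex.ofReal_one, one_mul]
      exact Complex.mem_slitPlane_iff.mpr hlog_ok
    have h3 := hc2.neg.tendsto.mono_left (nhdsWithin_le_nhds (s := Iio (1:ℝ)))
    simp only [Pi.neg_apply, Complex.ofReal_one, one_mul] at h3
    exact h3
  have hl_eq : l = -Complex.log (1 - z) := by
    refine tendsto_nhds_unique ?_ hcont
    refine hAbel.congr' ?_
    filter_upwards [Ioo_mem_nhdsLT_of_mem (⟨zero_lt_one, le_refl 1⟩ : (1:ℝ) ∈ Set.Ioc 0 1)]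
      with x hx
    exact heq x hx
  -- (11) dominated convergence as s → 1⁺
  have hdom : Tendsto (fun s : ℝ => ∑' k, g s k) (𝓝[>] (1:ℝ)) (𝓝 l) := by
    apply tendsto_tsum_of_dominated_convergence hbound_summable
    · intro k
      have hck : ∀ c : ℝ, 0 < c → ContinuousAt (fun s : ℝ => c ^ (-s)) 1 := by
        intro c hc
        exact (Real.continuousAt_const_rpow (ne_of_gt hc)).comp continuous_neg.continuousAt
      have hcg : ContinuousAt (fun s : ℝ => g s k) 1 := by
        simp only [hgdef, hbdef]
        apply ContinuousAt.mul continuousAt_const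
        have hc1 : ContinuousAt (fun s : ℝ => ((((k+1:ℕ):ℝ) ^ (-s) : ℝ) : ℂ)) 1 :=
          Complex.continuous_ofReal.continuousAt.comp (hck _ (by positivity))
        have hc2 : ContinuousAt (fun s : ℝ => ((((k+2:ℕ):ℝ) ^ (-s) : ℝ) : ℂ)) 1 :=
          Complex.continuous_ofReal.continuousAt.comp (hck _ (by positivity))
        exact hc1.sub hc2
      exact hcg.tendsto.mono_left nhdsWithin_le_nhds
    · filter_upwards [Ioc_mem_nhdsGT_of_mem (⟨le_refl 1, one_lt_two⟩ : (1:ℝ) ∈ Set.Ico 1 2)]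
        with s hs
      exact hgb s ⟨hs.1.le, hs.2⟩
  -- (12) continuity of expZeta at 1
  have hexp_cont : Tendsto (fun s : ℝ => expZeta (↑a : UnitAddCircle) (s:ℂ)) (𝓝[>] (1:ℝ))
      (𝓝 (expZeta (↑a : UnitAddCircle) 1)) := by
    have hc : ContinuousAt (fun s : ℝ => expZeta (↑a : UnitAddCircle) (s:ℂ)) 1 := by
      have h1 : ContinuousAt (expZeta (↑a : UnitAddCircle)) ((1:ℝ):ℂ) := by
        rw [Complex.ofReal_one]
        exact (differentiable_expZeta_of_ne_zero (coe_ne_zero h0 h1)).continuous.continuousAt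
      exact h1.comp Complex.continuous_ofReal.continuousAt
    have h2 := hc.tendsto.mono_left (nhdsWithin_le_nhds (s := Set.Ioi (1:ℝ)))
    rwa [Complex.ofReal_one] at h2
  -- (13) conclude
  have hfinal : Tendsto (fun s : ℝ => expZeta (↑a : UnitAddCircle) (s:ℂ)) (𝓝[>] (1:ℝ)) (𝓝 l) := by
    refine hdom.congr' ?_
    filter_upwards [Ioc_mem_nhdsGT_of_mem (⟨le_refl 1, one_lt_two⟩ : (1:ℝ) ∈ Set.Ico 1 2)]
      with s hs
    exact (hval s hs).symm
  have := tendsto_nhds_unique hexp_cont hfinal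
  rw [this, hl_eq, hzdef]


lemma deriv_sum_eq {a : ℝ} (h0 : 0 < a) (h1 : a < 1) :
    deriv (fun s : ℂ => hurwitzZeta (↑a : UnitAddCircle) s) 0
      + deriv (fun s : ℂ => hurwitzZeta (-↑a : UnitAddCircle) s) 0
      = (expZeta (↑a : UnitAddCircle) 1 + expZeta (-↑a : UnitAddCircle) 1) / 2 := by
  have ha : (↑a : UnitAddCircle) ≠ 0 := coe_ne_zero h0 h1
  have hna : (-↑a : UnitAddCircle) ≠ 0 := neg_ne_zero.mpr ha
  set G : ℂ → ℂ := fun t => (2 * (Real.pi:ℂ)) ^ (-t) * Complex.Gamma t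
      * (expZeta (↑a : UnitAddCircle) t + expZeta (-↑a : UnitAddCircle) t) with hGdef
  set H : ℂ → ℂ := fun t => cexp (-(Real.pi:ℂ) * I * t / 2) + cexp ((Real.pi:ℂ) * I * t / 2)
      with hHdef
  have hpi0 : ((Real.pi:ℂ)) ≠ 0 := by exact_mod_cast Real.pi_ne_zero
  -- eventual equality with the functional equation
  have h_eq : (fun t : ℂ => hurwitzZeta (↑a : UnitAddCircle) (1 - t)
      + hurwitzZeta (-↑a : UnitAddCircle) (1 - t)) =ᶠ[𝓝 (1:ℂ)] fun t => G t * H t := by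
    have hopen : IsOpen {t : ℂ | 0 < t.re} := isOpen_lt continuous_const Complex.continuous_re
    have hmem : (1:ℂ) ∈ {t : ℂ | 0 < t.re} := by norm_num
    filter_upwards [hopen.mem_nhds hmem] with t ht
    have hs : ∀ n : ℕ, t ≠ -(n:ℂ) := by
      intro n h
      rw [h] at ht
      simp only [Set.mem_setOf_eq, Complex.neg_re, Complex.natCast_re] at ht
      have := Nat.cast_nonneg (α := ℝ) n
      linarith
    rw [hurwitzZeta_one_sub (↑a : UnitAddCircle) hs (Or.inl ha),
      hurwitzZeta_one_sub (-↑a : UnitAddCircle) hs (Or.inl hna), neg_neg]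
    simp only [hGdef, hHdef]
    ring
  -- derivative of the left side
  have hL : deriv (fun t : ℂ => hurwitzZeta (↑a : UnitAddCircle) (1 - t)
      + hurwitzZeta (-↑a : UnitAddCircle) (1 - t)) 1
      = -(deriv (fun s : ℂ => hurwitzZeta (↑a : UnitAddCircle) s) 0
        + deriv (fun s : ℂ => hurwitzZeta (-↑a : UnitAddCircle) s) 0) := by
    have h := deriv_comp_const_sub
      (fun u => hurwitzZeta (↑a : UnitAddCircle) u + hurwitzZeta (-↑a : UnitAddCircle) u) 1 1
    have h11 : (1:ℂ) - 1 = 0 := by norm_num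
    rw [h11] at h
    rw [h]
    congr 1
    rw [deriv_fun_add (differentiableAt_hurwitzZeta _ (by norm_num))
      (differentiableAt_hurwitzZeta _ (by norm_num))]
  -- derivative of H
  have hH1 : HasDerivAt (fun t : ℂ => cexp (-(Real.pi:ℂ) * I * t / 2))
      (cexp (-(Real.pi:ℂ) * I * 1 / 2) * (-(Real.pi:ℂ) * I / 2)) 1 := by
    have hin : HasDerivAt (fun t : ℂ => -(Real.pi:ℂ) * I * t / 2) (-(Real.pi:ℂ) * I / 2) 1 := by
      simpa using ((hasDerivAt_id (1:ℂ)).const_mul (-(Real.pi:ℂ) * I)).div_const 2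
    exact hin.cexp
  have hH2 : HasDerivAt (fun t : ℂ => cexp ((Real.pi:ℂ) * I * t / 2))
      (cexp ((Real.pi:ℂ) * I * 1 / 2) * ((Real.pi:ℂ) * I / 2)) 1 := by
    have hin : HasDerivAt (fun t : ℂ => (Real.pi:ℂ) * I * t / 2) ((Real.pi:ℂ) * I / 2) 1 := by
      simpa using ((hasDerivAt_id (1:ℂ)).const_mul ((Real.pi:ℂ) * I)).div_const 2
    exact hin.cexp
  have hexp1 : cexp (-(Real.pi:ℂ) * I * 1 / 2) = -I := by
    rw [show (-(Real.pi:ℂ) * I * 1 / 2) = -((Real.pi:ℂ)/2) * I by ring, Complex.exp_mul_I]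
    rw [Complex.cos_neg, Complex.sin_neg, Complex.cos_pi_div_two, Complex.sin_pi_div_two]
    ring
  have hexp2 : cexp ((Real.pi:ℂ) * I * 1 / 2) = I := by
    rw [show ((Real.pi:ℂ) * I * 1 / 2) = ((Real.pi:ℂ)/2) * I by ring, Complex.exp_mul_I]
    rw [Complex.cos_pi_div_two, Complex.sin_pi_div_two]
    ring
  have hH : HasDerivAt H (-(Real.pi:ℂ)) 1 := by
    have h := hH1.add hH2
    rw [hexp1, hexp2] at h
    have hval : (-I) * (-(Real.pi:ℂ) * I / 2) + I * ((Real.pi:ℂ) * I / 2) = -(Real.pi:ℂ) := by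
      linear_combination (Real.pi:ℂ) * Complex.I_sq
    rwa [hval] at h
  have hH0 : H 1 = 0 := by
    simp only [hHdef]
    rw [hexp1, hexp2]
    ring
  -- G is differentiable at 1
  have hGdiff : DifferentiableAt ℂ G 1 := by
    have h2pi : (2 * (Real.pi:ℂ)) ≠ 0 := by
      simp [hpi0]
    have hd1 : DifferentiableAt ℂ (fun t : ℂ => (2 * (Real.pi:ℂ)) ^ (-t)) 1 :=
      (differentiableAt_id.neg).const_cpow (Or.inl h2pi)
    have hd2 : DifferentiableAt ℂ Complex.Gamma 1 := by
      apply Complex.differentiableAt_Gamma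
      intro m h
      have := congrArg Complex.re h
      simp only [Complex.one_re, Complex.neg_re, Complex.natCast_re] at this
      have h2 := Nat.cast_nonneg (α := ℝ) m
      linarith
    have hd3 : DifferentiableAt ℂ (fun t => expZeta (↑a : UnitAddCircle) t
        + expZeta (-↑a : UnitAddCircle) t) 1 :=
      ((differentiable_expZeta_of_ne_zero ha 1).add (differentiable_expZeta_of_ne_zero hna 1))
    exact (hd1.mul hd2).mul hd3
  -- compute deriv of G * H at 1
  have hFn : deriv (fun t => G t * H t) 1 = G 1 * (-(Real.pi:ℂ)) := by
    rw [deriv_fun_mul hGdiff hH.differentiableAt, hH0, hH.deriv]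
    ring
  have hG1 : G 1 = (expZeta (↑a : UnitAddCircle) 1 + expZeta (-↑a : UnitAddCircle) 1)
      / (2 * (Real.pi:ℂ)) := by
    simp only [hGdef]
    rw [Complex.Gamma_one, cpow_neg_one]
    field_simp
  -- combine
  have hderiv_eq := h_eq.deriv_eq
  rw [hL, hFn, hG1] at hderiv_eq
  have hsimp : (expZeta (↑a : UnitAddCircle) 1 + expZeta (-↑a : UnitAddCircle) 1)
      / (2 * (Real.pi:ℂ)) * (-(Real.pi:ℂ))
      = -((expZeta (↑a : UnitAddCircle) 1 + expZeta (-↑a : UnitAddCircle) 1) / 2) := by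
    field_simp
  rw [hsimp] at hderiv_eq
  exact neg_injective hderiv_eq


lemma re_pos_one_sub {w : ℂ} (hw : ‖w‖ = 1) (hw1 : w ≠ 1) : 0 < (1 - w).re := by
  rw [Complex.sub_re, Complex.one_re, sub_pos]
  rcases lt_or_ge w.re 1 with h | h
  · exact h
  · exfalso
    have habs : ‖w‖ = 1 := by exact hw
    have h2 : w.re ≤ 1 := by
      have := Complex.abs_re_le_norm w
      rw [habs] at this
      exact le_trans (le_abs_self _) this
    have hre1 : w.re = 1 := le_antisymm h2 h
    have hnsq : Complex.normSq w = 1 := by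
      rw [← Complex.sq_norm, habs]; norm_num
    rw [Complex.normSq_apply, hre1] at hnsq
    have him : w.im = 0 := by nlinarith
    exact hw1 (Complex.ext hre1 him)

lemma exp_one_sub_eq_conj (a : ℝ) :
    Complex.exp (2 * Real.pi * Complex.I * ((1 - a : ℝ) : ℂ))
      = (starRingEnd ℂ) (Complex.exp (2 * Real.pi * Complex.I * a)) := by
  rw [← Complex.exp_conj]
  have h1 : (starRingEnd ℂ) (2 * (Real.pi:ℂ) * Complex.I * (a:ℂ))
      = -(2 * (Real.pi:ℂ) * Complex.I * (a:ℂ)) := by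
    simp only [map_mul, Complex.conj_I, Complex.conj_ofReal, map_ofNat]
    ring
  rw [h1]
  have h2 : (2 * (Real.pi:ℂ) * Complex.I * ((1 - a : ℝ) : ℂ))
      = 2 * (Real.pi:ℂ) * Complex.I + -(2 * (Real.pi:ℂ) * Complex.I * (a:ℂ)) := by
    push_cast; ring
  rw [h2, Complex.exp_add, Complex.exp_two_pi_mul_I, one_mul]


end Stmt10Aux

/-- For every real `a` with `0 < a < 1`,
`(d/ds)|_{s=0} ζ(s, a) + (d/ds)|_{s=0} ζ(s, 1-a) = - log | e^{2π√(-1) a} - 1 |`, where the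
derivatives are in the `s`-variable of the meromorphically continued Hurwitz zeta function. -/
theorem stmt_10 (a : ℝ) (h0 : 0 < a) (h1 : a < 1) :
    deriv (fun s : ℂ => HurwitzZeta.hurwitzZeta (↑a : UnitAddCircle) s) 0
      + deriv (fun s : ℂ => HurwitzZeta.hurwitzZeta (↑(1 - a) : UnitAddCircle) s) 0
      = -(Real.log ‖Complex.exp (2 * Real.pi * Complex.I * a) - 1‖ : ℂ) := by
  set z : ℂ := Complex.exp (2 * Real.pi * Complex.I * a) with hzdef
  have hz1 : z ≠ 1 := Stmt10Aux.z_ne_one h0 h1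
  have hzn : ‖z‖ = 1 := Stmt10Aux.norm_z a
  rw [Stmt10Aux.coe_one_sub a, Stmt10Aux.deriv_sum_eq h0 h1]
  have h1' : expZeta (↑a : UnitAddCircle) 1 = -Complex.log (1 - z) := Stmt10Aux.expZeta_apply_one h0 h1
  have h2' : expZeta (-↑a : UnitAddCircle) 1 = -Complex.log ((starRingEnd ℂ) (1 - z)) := by
    rw [← Stmt10Aux.coe_one_sub a, Stmt10Aux.expZeta_apply_one (by linarith : (0:ℝ) < 1 - a) (by linarith : (1:ℝ) - a < 1)]
    rw [show (((1 - a : ℝ)) : ℂ) = ((1:ℝ):ℂ) - (a:ℂ) by push_cast; ring] at *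
    rw [show (1 : ℂ) - Complex.exp (2 * Real.pi * Complex.I * (((1:ℝ):ℂ) - (a:ℂ)))
        = (starRingEnd ℂ) (1 - z) by
      rw [map_sub, map_one]
      congr 1
      have := Stmt10Aux.exp_one_sub_eq_conj a
      push_cast at this ⊢
      rw [← this]]
  rw [h1', h2']
  have harg : (1 - z).arg ≠ Real.pi := by
    intro h
    have := Complex.arg_eq_pi_iff.mp h
    linarith [Stmt10Aux.re_pos_one_sub hzn hz1, this.1]
  rw [Complex.log_conj _ harg]
  rw [show -Complex.log (1 - z) + -((starRingEnd ℂ) (Complex.log (1 - z)))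
      = -(Complex.log (1 - z) + (starRingEnd ℂ) (Complex.log (1 - z))) by ring,
    Complex.add_conj, Complex.log_re]
  rw [show ‖z - 1‖ = ‖1 - z‖ from norm_sub_rev _ _]
  push_cast
  ring
end
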